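/- Let n ≥ 2 be an integer, let 0 < p < 1/2, and let Y_1, …, Y_n be independent random variables, each geometrically distributed with parameter p, i.e. ℙ(Y_i = k) = p(1−p)^{k−1} for every integer k ≥ 1. Then for every real a ≥ 2p: ℙ( Y_1 + … + Y_n ≤ a·n/p ) ≤ (2a·e²)^n. -/

import Mathlib

set_option maxHeartbeats 1000000


open MeasureTheory ProbabilityTheory

/-- The probability that a geometric variable takes value 0 is 0. -/
lemma geom_zero {Ω : Type*} [MeasurableSpace Ω] (P : Measure Ω) [IsProbabilityMeasure P]
    (p : ℝ) (hp0 : 0 < p) (hp1 : p < 1) (Y : Ω → ℕ) (hm : Measurable Y)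
    (hg : ∀ k : ℕ, 1 ≤ k → P {ω | Y ω = k} = ENNReal.ofReal (p * (1 - p) ^ (k - 1))) :
    P {ω | Y ω = 0} = 0 := by
  have hdisj : Pairwise (Function.onFun Disjoint (fun k : ℕ => {ω | Y ω = k})) := by
    intro i j hij
    simp only [Function.onFun, Set.disjoint_left]
    rintro ω (h1 : Y ω = i) (h2 : Y ω = j)
    exact hij (h1 ▸ h2 ▸ rfl)
  have hmeask : ∀ k : ℕ, MeasurableSet {ω | Y ω = k} := fun k =>
    hm (measurableSet_singleton k)
  have huniv : (⋃ k : ℕ, {ω | Y ω = k}) = Set.univ := by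
    ext ω; simp only [Set.mem_iUnion, Set.mem_setOf_eq, Set.mem_univ, iff_true]
    exact ⟨Y ω, rfl⟩
  have hsum : (∑' k : ℕ, P {ω | Y ω = k}) = 1 := by
    rw [← measure_iUnion hdisj hmeask, huniv, measure_univ]
  have hsplit : (∑' k : ℕ, P {ω | Y ω = k})
      = P {ω | Y ω = 0} + ∑' k : ℕ, P {ω | Y ω = k + 1} :=
    tsum_eq_zero_add' ENNReal.summable
  have htail : (∑' k : ℕ, P {ω | Y ω = k + 1}) = 1 := by
    have h1 : ∀ k : ℕ, P {ω | Y ω = k + 1} = ENNReal.ofReal (p * (1 - p) ^ k) := by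
      intro k
      have := hg (k + 1) (Nat.le_add_left 1 k)
      simpa using this
    simp_rw [h1]
    rw [← ENNReal.ofReal_tsum_of_nonneg]
    · rw [tsum_mul_left, tsum_geometric_of_lt_one (by linarith) (by linarith)]
      have : (1 : ℝ) - (1 - p) = p := by ring
      rw [this, mul_inv_cancel₀ hp0.ne', ENNReal.ofReal_one]
    · intro k; exact mul_nonneg hp0.le (pow_nonneg (by linarith) k)
    · exact Summable.mul_left p (summable_geometric_of_lt_one (by linarith) (by linarith))
  rw [hsplit, htail] at hsum
  have h0 : P {ω | Y ω = 0} + 1 = 0 + 1 := by simpa using hsum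
  exact (ENNReal.add_left_inj ENNReal.one_ne_top).mp h0

/-- Bound on the mgf of a geometric random variable at a negative argument. -/
lemma geom_mgf_le {Ω : Type*} [MeasurableSpace Ω] (P : Measure Ω) [IsProbabilityMeasure P]
    (p : ℝ) (hp0 : 0 < p) (hp1 : p < 1) (Y : Ω → ℕ) (hm : Measurable Y)
    (hg : ∀ k : ℕ, 1 ≤ k → P {ω | Y ω = k} = ENNReal.ofReal (p * (1 - p) ^ (k - 1)))
    (t : ℝ) (ht : t < 0) :
    mgf (fun ω => (Y ω : ℝ)) P t ≤ p * Real.exp t / (1 - Real.exp t) := by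
  have hY0 := geom_zero P p hp0 hp1 Y hm hg
  set r := Real.exp t with hr
  have hr0 : 0 < r := Real.exp_pos t
  have hr1 : r < 1 := by rw [hr, Real.exp_lt_one_iff]; exact ht
  have hgk : ∀ k : ℕ, Real.exp (t * k) = r ^ k := fun k => by
    rw [mul_comm, Real.exp_nat_mul]
  have hgm : Measurable (fun k : ℕ => Real.exp (t * k)) := measurable_from_top
  have hpm : IsProbabilityMeasure (P.map Y) := Measure.isProbabilityMeasure_map hm.aemeasurable
  have hint : Integrable (fun k : ℕ => Real.exp (t * k)) (P.map Y) := by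
    refine (integrable_const (1 : ℝ)).mono' hgm.aestronglyMeasurable (ae_of_all _ fun k => ?_)
    rw [Real.norm_eq_abs, abs_of_pos (Real.exp_pos _)]
    exact Real.exp_le_one_iff.mpr
      (mul_nonpos_of_nonpos_of_nonneg ht.le (Nat.cast_nonneg k))
  set c : ℕ → ℝ := fun k => (P {ω | Y ω = k}).toReal * Real.exp (t * k) with hc
  have hmeq : mgf (fun ω => (Y ω : ℝ)) P t = ∑' k : ℕ, c k := by
    rw [mgf, ← integral_map hm.aemeasurable hgm.aestronglyMeasurable,
      integral_countable' hint]
    refine tsum_congr fun k => ?_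
    rw [measureReal_def, Measure.map_apply hm (measurableSet_singleton k)]
    simp [hc, Set.preimage, smul_eq_mul]
  have hc0 : c 0 = 0 := by simp [hc, hY0]
  have hck : ∀ k : ℕ, c (k + 1) = p * (1 - p) ^ k * r ^ (k + 1) := by
    intro k
    have h1 := hg (k + 1) (Nat.le_add_left 1 k)
    simp only [Nat.add_sub_cancel] at h1
    rw [hc]
    simp only [h1, hgk]
    rw [ENNReal.toReal_ofReal (mul_nonneg hp0.le (pow_nonneg (by linarith) k))]
  have hcle : ∀ k : ℕ, c k ≤ r ^ k := by
    intro k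
    cases k with
    | zero => simp [hc0]
    | succ k =>
      rw [hck k]
      have hpow : (1 - p) ^ k ≤ 1 := pow_le_one₀ (by linarith) (by linarith)
      have hpow0 : 0 ≤ (1 - p) ^ k := pow_nonneg (by linarith) k
      have h1 : p * (1 - p) ^ k ≤ 1 := by nlinarith
      calc p * (1 - p) ^ k * r ^ (k + 1) ≤ 1 * r ^ (k + 1) :=
            mul_le_mul_of_nonneg_right h1 (pow_nonneg hr0.le _)
        _ = r ^ (k + 1) := one_mul _
  have hcnn : ∀ k : ℕ, 0 ≤ c k := fun k =>
    mul_nonneg ENNReal.toReal_nonneg (Real.exp_pos _).le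
  have hsc : Summable c :=
    Summable.of_nonneg_of_le hcnn hcle (summable_geometric_of_lt_one hr0.le hr1)
  rw [hmeq, Summable.tsum_eq_zero_add hsc, hc0, zero_add]
  have hbound : ∀ k : ℕ, c (k + 1) ≤ p * r * r ^ k := by
    intro k
    rw [hck k, pow_succ]
    have hpow : (1 - p) ^ k ≤ 1 := pow_le_one₀ (by linarith) (by linarith)
    have h2 : p * (1 - p) ^ k ≤ p := by nlinarith
    calc p * (1 - p) ^ k * (r ^ k * r) ≤ p * (r ^ k * r) :=
          mul_le_mul_of_nonneg_right h2 (mul_nonneg (pow_nonneg hr0.le _) hr0.le)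
      _ = p * r * r ^ k := by ring
  calc (∑' k : ℕ, c (k + 1)) ≤ ∑' k : ℕ, p * r * r ^ k := by
        refine Summable.tsum_le_tsum hbound ((summable_nat_add_iff 1).mpr hsc) ?_
        exact (summable_geometric_of_lt_one hr0.le hr1).mul_left _
    _ = p * r * (1 - r)⁻¹ := by
        rw [tsum_mul_left, tsum_geometric_of_lt_one hr0.le hr1]
    _ = p * r / (1 - r) := by ring

theorem stmt9 {Ω : Type*} [MeasurableSpace Ω] (P : Measure Ω) [IsProbabilityMeasure P]
    (n : ℕ) (hn : 2 ≤ n) (p : ℝ) (hp0 : 0 < p) (hp : p < 1 / 2)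
    (Y : Fin n → Ω → ℕ) (hmeas : ∀ i, Measurable (Y i))
    (hindep : iIndepFun Y P)
    (hgeom : ∀ i, ∀ k : ℕ, 1 ≤ k →
      P {ω | Y i ω = k} = ENNReal.ofReal (p * (1 - p) ^ (k - 1)))
    (a : ℝ) (ha : 2 * p ≤ a) :
    P {ω | ((∑ i, Y i ω : ℕ) : ℝ) ≤ a * n / p} ≤
      ENNReal.ofReal ((2 * a * Real.exp 2) ^ n) := by
  have ha0 : 0 < a := lt_of_lt_of_le (by linarith) ha
  set s : ℝ := p / a with hs
  have hs0 : 0 < s := div_pos hp0 ha0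
  have hs2 : s ≤ 1 / 2 := by
    rw [hs, div_le_iff₀ ha0]; linarith
  set t : ℝ := -s with htdef
  have ht : t < 0 := neg_neg_iff_pos.mpr hs0
  set X : Fin n → Ω → ℝ := fun i ω => (Y i ω : ℝ) with hX
  have hXmeas : ∀ i, Measurable (X i) := fun i => measurable_from_top.comp (hmeas i)
  have hXindep : iIndepFun X P :=
    hindep.comp (fun _ (k : ℕ) => (k : ℝ)) fun _ => measurable_from_top
  have h_int : ∀ i, Integrable (fun ω => Real.exp (t * X i ω)) P := by
    intro i
    refine (integrable_const (1 : ℝ)).mono'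
      (((hXmeas i).const_mul t).exp).aestronglyMeasurable (ae_of_all _ fun ω => ?_)
    rw [Real.norm_eq_abs, abs_of_pos (Real.exp_pos _)]
    exact Real.exp_le_one_iff.mpr
      (mul_nonpos_of_nonpos_of_nonneg ht.le (Nat.cast_nonneg _))
  -- bound on each mgf
  have hmgf : ∀ i, mgf (X i) P t ≤ 2 * a := by
    intro i
    refine le_trans (geom_mgf_le P p hp0 (by linarith) (Y i) (hmeas i) (hgeom i) t ht) ?_
    -- p * exp t / (1 - exp t) ≤ 2 * a
    have he1 : Real.exp t < 1 := by rw [Real.exp_lt_one_iff]; exact ht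
    have hden : s / 2 ≤ 1 - Real.exp t := by
      have h1 : Real.exp t ≤ 1 / (1 + s) := by
        rw [htdef, Real.exp_neg, inv_eq_one_div]
        apply div_le_div_of_nonneg_left one_pos.le (by linarith) ?_
        linarith [Real.add_one_le_exp s]
      have h2 : 1 / (1 + s) ≤ 1 - s / 2 := by
        rw [div_le_iff₀ (by linarith)]
        nlinarith
      linarith
    rw [div_le_iff₀ (by linarith)]
    have hp_as : p = a * s := by
      rw [hs]; field_simp
    nlinarith [Real.exp_pos t, (Real.exp_lt_one_iff (x := t)).mpr ht]
  -- Chernoff bound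
  have hset : {ω | ((∑ i, Y i ω : ℕ) : ℝ) ≤ a * n / p}
      = {ω | (∑ i, X i) ω ≤ a * n / p} := by
    ext ω
    simp [hX, Finset.sum_apply]
  have hcher := measure_le_le_exp_mul_mgf (μ := P) (X := ∑ i, X i) (a * n / p) ht.le
    (iIndepFun.integrable_exp_mul_sum hXindep hXmeas fun i _ => h_int i)
  rw [iIndepFun.mgf_sum hXindep hXmeas Finset.univ] at hcher
  have hexp : -t * (a * n / p) = n := by
    rw [htdef, neg_neg, hs]
    field_simp
  have hprod : (∏ i, mgf (X i) P t) ≤ (2 * a) ^ n := by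
    calc (∏ i, mgf (X i) P t) ≤ ∏ _i : Fin n, (2 * a) :=
          Finset.prod_le_prod (fun i _ => mgf_nonneg) (fun i _ => hmgf i)
      _ = (2 * a) ^ n := by
          rw [Finset.prod_const, Finset.card_univ, Fintype.card_fin]
  have hfinal : (P {ω | ((∑ i, Y i ω : ℕ) : ℝ) ≤ a * n / p}).toReal
      ≤ (2 * a * Real.exp 2) ^ n := by
    rw [hset]
    refine le_trans hcher ?_
    rw [hexp]
    have hcast : (n : ℝ) ≤ 2 * n := by
      have : (0 : ℝ) ≤ n := Nat.cast_nonneg n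
      linarith
    calc Real.exp n * ∏ i, mgf (X i) P t ≤ Real.exp (2 * n) * (2 * a) ^ n :=
          mul_le_mul (Real.exp_le_exp.mpr hcast) hprod
            (Finset.prod_nonneg fun i _ => mgf_nonneg) (Real.exp_pos _).le
      _ = (2 * a * Real.exp 2) ^ n := by
          rw [mul_pow, mul_pow, ← Real.exp_nat_mul, mul_comm (n : ℝ) 2]
          ring
  calc P {ω | ((∑ i, Y i ω : ℕ) : ℝ) ≤ a * n / p}
      = ENNReal.ofReal ((P {ω | ((∑ i, Y i ω : ℕ) : ℝ) ≤ a * n / p}).toReal) :=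
        (ENNReal.ofReal_toReal (measure_ne_top P _)).symm
    _ ≤ ENNReal.ofReal ((2 * a * Real.exp 2) ^ n) := ENNReal.ofReal_le_ofReal hfinal
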